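/- For each fixed t > 0 and y ≥ 0, the function β ↦ Φ((y - βt)/(σ√t)) - e^{2βy/σ²} Φ((-y - βt)/(σ√t)) is monotone decreasing in β, where Φ is the standard normal CDF. -/

import Mathlib

/-- The standard normal cumulative distribution function. -/
noncomputable def stdNormalCDF (x : ℝ) : ℝ :=
  (Real.sqrt (2 * Real.pi))⁻¹ * ∫ u in Set.Iic x, Real.exp (-(u ^ 2) / 2)

lemma gauss_integrable : MeasureTheory.Integrable (fun u : ℝ => Real.exp (-(u ^ 2) / 2)) := by
  have h := integrable_exp_neg_mul_sq (by norm_num : (0:ℝ) < 1/2)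
  convert h using 2 with u
  ring_nf

lemma hasDerivAt_stdNormalCDF (x : ℝ) :
    HasDerivAt stdNormalCDF ((Real.sqrt (2 * Real.pi))⁻¹ * Real.exp (-(x ^ 2) / 2)) x := by
  set f : ℝ → ℝ := fun u => Real.exp (-(u ^ 2) / 2) with hf
  have hcont : Continuous f := by continuity
  have hint := gauss_integrable
  have key : stdNormalCDF = fun z =>
      (Real.sqrt (2 * Real.pi))⁻¹ * ((∫ u in Set.Iic (0:ℝ), f u) + ∫ u in (0:ℝ)..z, f u) := by
    funext z
    have h := intervalIntegral.integral_Iic_sub_Iic (hint.integrableOn (s := Set.Iic 0))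
      (hint.integrableOn (s := Set.Iic z))
    unfold stdNormalCDF
    simp only [hf]
    rw [← h]
    ring
  rw [key]
  have hd : HasDerivAt (fun z => ∫ u in (0:ℝ)..z, f u) (f x) x :=
    intervalIntegral.integral_hasDerivAt_right hint.intervalIntegrable
      (hcont.stronglyMeasurable.stronglyMeasurableAtFilter) hcont.continuousAt
  simpa using (hd.const_add _).const_mul _

lemma stdNormalCDF_nonneg (x : ℝ) : 0 ≤ stdNormalCDF x := by
  unfold stdNormalCDF
  apply mul_nonneg (by positivity)
  apply MeasureTheory.setIntegral_nonneg measurableSet_Iic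
  intro u _
  positivity

/-- For fixed `t > 0` and `y ≥ 0`, the RBM cdf
`β ↦ Φ((y - βt)/(σ√t)) - e^{2βy/σ²} Φ((-y - βt)/(σ√t))` is monotone decreasing in `β`. -/
theorem stmt2 (σ t y : ℝ) (hσ : 0 < σ) (ht : 0 < t) (hy : 0 ≤ y) :
    Antitone (fun β : ℝ =>
      stdNormalCDF ((y - β * t) / (σ * Real.sqrt t))
        - Real.exp (2 * β * y / σ ^ 2) * stdNormalCDF ((-y - β * t) / (σ * Real.sqrt t))) := by
  set c : ℝ := σ * Real.sqrt t with hcdef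
  have hc : 0 < c := mul_pos hσ (Real.sqrt_pos.mpr ht)
  have hc2 : c ^ 2 = σ ^ 2 * t := by
    rw [hcdef, mul_pow, Real.sq_sqrt ht.le]
  set k : ℝ := (Real.sqrt (2 * Real.pi))⁻¹ with hk
  apply antitone_of_hasDerivAt_nonpos
    (f' := fun β => -(2 * y / σ ^ 2 * Real.exp (2 * β * y / σ ^ 2)
      * stdNormalCDF ((-y - β * t) / c)))
  · intro β
    have hinner1 : HasDerivAt (fun β : ℝ => (y - β * t) / c) (-t / c) β := by
      have := (((hasDerivAt_id β).mul_const t).const_sub y).div_const c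
      simpa using this
    have hinner2 : HasDerivAt (fun β : ℝ => (-y - β * t) / c) (-t / c) β := by
      have := (((hasDerivAt_id β).mul_const t).const_sub (-y)).div_const c
      simpa using this
    have h1 : HasDerivAt (fun β : ℝ => stdNormalCDF ((y - β * t) / c))
        (k * Real.exp (-(((y - β * t) / c) ^ 2) / 2) * (-t / c)) β :=
      (hasDerivAt_stdNormalCDF _).comp β hinner1
    have h2 : HasDerivAt (fun β : ℝ => stdNormalCDF ((-y - β * t) / c))
        (k * Real.exp (-(((-y - β * t) / c) ^ 2) / 2) * (-t / c)) β :=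
      (hasDerivAt_stdNormalCDF _).comp β hinner2
    have hexp : HasDerivAt (fun β : ℝ => Real.exp (2 * β * y / σ ^ 2))
        (2 * y / σ ^ 2 * Real.exp (2 * β * y / σ ^ 2)) β := by
      have hl : HasDerivAt (fun β : ℝ => 2 * β * y / σ ^ 2) (2 * y / σ ^ 2) β := by
        have := (((hasDerivAt_id β).const_mul 2).mul_const y).div_const (σ ^ 2)
        simpa [mul_comm, mul_assoc] using this
      simpa [mul_comm] using hl.exp
    have hF := h1.sub (hexp.mul h2)
    have hident : Real.exp (2 * β * y / σ ^ 2) * Real.exp (-(((-y - β * t) / c) ^ 2) / 2)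
        = Real.exp (-(((y - β * t) / c) ^ 2) / 2) := by
      rw [← Real.exp_add]
      congr 1
      rw [div_pow, div_pow, hc2]
      field_simp
      ring
    convert hF using 1
    case e'_4 => rfl
    case e'_5 => rfl
    case e'_8 => rfl
    have : Real.exp (2 * β * y / σ ^ 2) * (k * Real.exp (-(((-y - β * t) / c) ^ 2) / 2) * (-t / c))
        = k * Real.exp (-(((y - β * t) / c) ^ 2) / 2) * (-t / c) := by
      rw [← hident]; ring
    rw [this]
    ring
  · intro β
    simp only [Pi.zero_apply, neg_nonpos]
    have h1 : 0 ≤ 2 * y / σ ^ 2 := by positivity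
    exact mul_nonneg (mul_nonneg h1 (Real.exp_nonneg _)) (stdNormalCDF_nonneg _)
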